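/- arXiv:math/0608277 — 2 statements merged into one kernel-verified Lean document; each statement's English description precedes it below -/
import Mathlib

section
/- For every v ∈ WI₂ there exists a family {v_t}_{t∈[0,1]} of maps in WI₂ such that v₀ = v, v₁ = id, and for every s ∈ [0,1], μ({x ∈ [0,1) : v_t(x) ≠ v_s(x)}) → 0 as t → s. -/
open MeasureTheory Set Real Filter
open scoped symmDiff Classical

noncomputable section

/-- The Littlewood–Paley set `E = [-2π,-π) ∪ [π,2π)`. -/
def E : Set ℝ := Ico (-(2*π)) (-π) ∪ Ico π (2*π)

/-- `tau x = x + 2jπ`, where `j` is the unique integer with `x + 2jπ ∈ E`. -/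
def tau (x : ℝ) : ℝ :=
  if x - 2*π*(⌊x/(2*π)⌋ : ℝ) < π then x - 2*π*(⌊x/(2*π)⌋ : ℝ) - 2*π
  else x - 2*π*(⌊x/(2*π)⌋ : ℝ)

/-- `delta x = 2^k x`, where (for `x ≠ 0`) `k` is the unique integer with `2^k x ∈ E`. -/
def delta (x : ℝ) : ℝ :=
  if 0 < x then (2:ℝ)^(⌈Real.logb 2 (π/x)⌉) * x
  else (2:ℝ)^(⌊Real.logb 2 (2*π/(-x))⌋) * x

/-- The map `ξ : E → [0,1)`. -/
def xiMap (x : ℝ) : ℝ := if x < 0 then x/(2*π) + 1 else x/(2*π)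

/-- The inverse `ξ⁻¹ : [0,1) → E`. -/
def xiInv (y : ℝ) : ℝ := if y < 1/2 then 2*π*(y-1) else 2*π*y

/-- The translates `{W + 2kπ}_{k ∈ ℤ}` form a partition of `ℝ`. -/
def TransPartition (W : Set ℝ) : Prop :=
  (⋃ k : ℤ, (fun x : ℝ => x + 2*π*(k:ℝ)) '' W) = univ ∧
  Pairwise fun k l : ℤ =>
    Disjoint ((fun x : ℝ => x + 2*π*(k:ℝ)) '' W) ((fun x : ℝ => x + 2*π*(l:ℝ)) '' W)

/-- The dilates `{2^k W}_{k ∈ ℤ}` form a partition of `ℝ \ {0}`. -/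
def DilPartition (W : Set ℝ) : Prop :=
  (⋃ k : ℤ, (fun x : ℝ => (2:ℝ)^k * x) '' W) = {(0:ℝ)}ᶜ ∧
  Pairwise fun k l : ℤ =>
    Disjoint ((fun x : ℝ => (2:ℝ)^k * x) '' W) ((fun x : ℝ => (2:ℝ)^l * x) '' W)

/-- A regularized wavelet set. -/
def IsRegularizedWaveletSet (W : Set ℝ) : Prop :=
  MeasurableSet W ∧ TransPartition W ∧ DilPartition W

/-- The wavelet induced isomorphism `h̃_W = ξ ∘ τ|_W ∘ (δ|_W)⁻¹ ∘ ξ⁻¹` of `[0,1)`. -/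
def hIso (W : Set ℝ) : ℝ → ℝ :=
  fun t => xiMap (tau (Function.invFunOn delta W (xiInv t)))

/-- The class of wavelet induced maps of `[0,1)` (Proposition 2.3 (i)-(ii)). -/
def IsWaveletInduced (h : ℝ → ℝ) : Prop :=
  Set.BijOn h (Ico (0:ℝ) 1) (Ico (0:ℝ) 1) ∧
  Measurable ((Ico (0:ℝ) 1).restrict h) ∧
  ∃ A B : ℤ → Set ℝ,
    (∀ k, MeasurableSet (A k)) ∧ (∀ k, MeasurableSet (B k)) ∧
    (⋃ k, A k) = Ico (1/2 : ℝ) 1 ∧ Pairwise (Function.onFun Disjoint A) ∧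
    (⋃ k, B k) = Ico (0:ℝ) (1/2) ∧ Pairwise (Function.onFun Disjoint B) ∧
    (∀ k, ∀ x ∈ A k, h x = Int.fract ((2:ℝ)^k * x)) ∧
    (∀ k, ∀ x ∈ B k, h x = Int.fract ((2:ℝ)^k * (x - 1)))

/-- The class `WI₁`. -/
def MemWI1 (f : ℝ → ℝ) : Prop :=
  ∃ A B : ℕ → Set ℝ,
    (∀ k, MeasurableSet (A k)) ∧ (∀ k, MeasurableSet (B k)) ∧
    (⋃ k, A k) = Ico (1/2 : ℝ) 1 ∧ Pairwise (Function.onFun Disjoint A) ∧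
    (⋃ k, B k) = Ico (0:ℝ) (1/2) ∧ Pairwise (Function.onFun Disjoint B) ∧
    (∀ k, ∀ x ∈ A k, f x = x / 2^(k+1)) ∧
    (∀ k, ∀ x ∈ B k, f x = (x - 1) / 2^(k+1) + 1)

/-- The class `WI₂`. -/
def MemWI2 (g : ℝ → ℝ) : Prop :=
  Measurable ((Ico (0:ℝ) 1).restrict g) ∧
  Set.MapsTo g (Ico (0:ℝ) 1) (Ico (0:ℝ) 1) ∧
  Set.InjOn g (Ico (0:ℝ) 1) ∧
  ∀ x ∈ Ico (0:ℝ) 1, ∃ k l : ℕ, g x = (x + l) / 2^k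

/-- The Schröder–Cantor–Bernstein map `u ⋄ v` for injections between arbitrary types. -/
def scb {α β : Type*} (u : α → β) (v : β → α) : α → β :=
  fun x =>
    if x ∈ ⋃ k : ℕ, (v ∘ u)^[k] '' (Set.range v)ᶜ then u x
    else if h2 : x ∈ Set.range v then Classical.choose h2
    else u x

/-- The Schröder–Cantor–Bernstein map `u ⋄ v` for maps of `[0,1)`. -/
def scbOn (u v : ℝ → ℝ) : ℝ → ℝ :=
  fun x =>
    if x ∈ ⋃ k : ℕ, (v ∘ u)^[k] '' (Ico (0:ℝ) 1 \ v '' (Ico (0:ℝ) 1)) then u x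
    else Function.invFunOn v (Ico (0:ℝ) 1) x

/-- The metric `d` on wavelet sets. -/
def dws (W₁ W₂ : Set ℝ) : ℝ :=
  Real.sqrt (volume (W₁ ∆ W₂)).toReal + Real.sqrt (∫ x in W₁ ∆ W₂, |x|⁻¹)

/-- The measure `ν` on `[0,1)` with density `(1-x)⁻¹` on `[0,1/2)` and `x⁻¹` on `[1/2,1)`. -/
def nuMeasure : Measure ℝ :=
  volume.withDensity (fun x =>
    ENNReal.ofReal (if x ∈ Ico (0:ℝ) (1/2) then (1-x)⁻¹
      else if x ∈ Ico (1/2:ℝ) 1 then x⁻¹ else 0))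


open scoped Pointwise

namespace WI2Chain

variable (v : ℝ → ℝ)

/-- fixed points of `v` inside `[0,1)` -/
def fixSet : Set ℝ := {x ∈ Ico (0:ℝ) 1 | v x = x}

def pieceC (k l : ℕ) : Set ℝ := {x ∈ Ico (0:ℝ) 1 | v x = (x + l) / 2 ^ k}

def pieceD (n : ℕ) : Set ℝ :=
  pieceC v (Nat.unpair n).1 (Nat.unpair n).2 \
    ⋃ m ∈ Finset.range n, pieceC v (Nat.unpair m).1 (Nat.unpair m).2

def affF (n : ℕ) : ℝ → ℝ :=
  fun y => ((2:ℝ) ^ (Nat.unpair n).1)⁻¹ * y + ((Nat.unpair n).2 : ℝ) / 2 ^ (Nat.unpair n).1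

def orbIter (A : Set ℝ) : ℕ → Set ℝ
  | 0 => A
  | n+1 => v '' orbIter A n

def orbSet (A : Set ℝ) : Set ℝ := ⋃ n, orbIter v A n

def St (c : ℝ) : Set ℝ := orbSet v (Ico (1 - c) 1)

def vchain (t : ℝ) : ℝ → ℝ := fun x => if x ∈ Ico (0:ℝ) 1 \ St v (1 - t) then x else v x

/-! ### generic affine lemmas -/

lemma vol_affine_image (a b : ℝ) (s : Set ℝ) :
    volume ((fun y => a * y + b) '' s) = ENNReal.ofReal |a| * volume s := by
  have h : (fun y => a * y + b) '' s = (fun y => y + b) '' (a • s) := by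
    rw [← Set.image_smul, Set.image_image]; simp [smul_eq_mul]
  rw [h]
  simp [Set.image_add_right, measure_preimage_add_right, Measure.addHaar_smul]

lemma measurable_affine_image {a : ℝ} (b : ℝ) (ha : a ≠ 0) {s : Set ℝ} (hs : MeasurableSet s) :
    MeasurableSet ((fun y => a * y + b) '' s) := by
  have h : (fun y => a * y + b) '' s = (fun y => y + b) '' (a • s) := by
    rw [← Set.image_smul, Set.image_image]; simp [smul_eq_mul]
  rw [h, Set.image_add_right]
  exact (hs.const_smul_of_ne_zero ha).preimage (measurable_add_const _)

/-! ### measurability of the pieces -/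

variable {v}

lemma measurable_sep (hm : Measurable ((Ico (0:ℝ) 1).restrict v)) {g : ℝ → ℝ}
    (hg : Measurable g) : MeasurableSet {x ∈ Ico (0:ℝ) 1 | v x = g x} := by
  have h : {x ∈ Ico (0:ℝ) 1 | v x = g x} =
      Subtype.val '' {y : Ico (0:ℝ) 1 | v y.val = g y.val} := by
    ext x
    constructor
    · rintro ⟨hx, he⟩; exact ⟨⟨x, hx⟩, he, rfl⟩
    · rintro ⟨⟨y, hy⟩, he, rfl⟩; exact ⟨hy, he⟩
  rw [h]
  exact MeasurableSet.subtype_image measurableSet_Ico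
    (measurableSet_eq_fun hm (hg.comp measurable_subtype_coe))

lemma measurable_fixSet (hm : Measurable ((Ico (0:ℝ) 1).restrict v)) :
    MeasurableSet (fixSet v) :=
  measurable_sep hm measurable_id

lemma measurable_pieceC (hm : Measurable ((Ico (0:ℝ) 1).restrict v)) (k l : ℕ) :
    MeasurableSet (pieceC v k l) :=
  measurable_sep hm (by fun_prop)

lemma measurable_pieceD (hm : Measurable ((Ico (0:ℝ) 1).restrict v)) (n : ℕ) :
    MeasurableSet (pieceD v n) :=
  (measurable_pieceC hm _ _).diff
    (MeasurableSet.biUnion (Finset.range n).countable_toSet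
      (fun m _ => measurable_pieceC hm _ _))

lemma pieceD_disjoint : Pairwise (Function.onFun Disjoint (pieceD v)) := by
  intro n m hnm
  wlog h : n < m generalizing n m
  · exact (this hnm.symm (by omega)).symm
  refine Set.disjoint_left.2 fun x hx hx' => ?_
  exact hx'.2 (Set.mem_iUnion₂.2 ⟨n, Finset.mem_range.2 h, hx.1⟩)

lemma pieceD_cover (hl : ∀ x ∈ Ico (0:ℝ) 1, ∃ k l : ℕ, v x = (x + l) / 2^k) :
    Ico (0:ℝ) 1 ⊆ ⋃ n, pieceD v n := by
  intro x hx
  obtain ⟨k, l, he⟩ := hl x hx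
  have hex : ∃ n, x ∈ pieceC v (Nat.unpair n).1 (Nat.unpair n).2 :=
    ⟨Nat.pair k l, by simp only [Nat.unpair_pair]; exact ⟨hx, he⟩⟩
  classical
  let n₀ := Nat.find hex
  refine Set.mem_iUnion.2 ⟨n₀, Nat.find_spec hex, fun hmem => ?_⟩
  simp only [Set.mem_iUnion, Finset.mem_coe, Finset.mem_range] at hmem
  obtain ⟨m, hm, hmC⟩ := hmem
  exact absurd hmC (Nat.find_min hex hm)

lemma vD_eq {n : ℕ} {x : ℝ} (hx : x ∈ pieceD v n) : v x = affF n x := by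
  have h := hx.1.2
  have : ((2:ℝ) ^ (Nat.unpair n).1) ≠ 0 := by positivity
  rw [h, affF]
  field_simp

lemma image_eq (hl : ∀ x ∈ Ico (0:ℝ) 1, ∃ k l : ℕ, v x = (x + l) / 2^k)
    {M : Set ℝ} (hM : M ⊆ Ico (0:ℝ) 1) :
    v '' M = ⋃ n, affF n '' (M ∩ pieceD v n) := by
  ext z
  constructor
  · rintro ⟨x, hx, rfl⟩
    obtain ⟨n, hn⟩ := Set.mem_iUnion.1 (pieceD_cover hl (hM hx))
    exact Set.mem_iUnion.2 ⟨n, x, ⟨hx, hn⟩, (vD_eq hn).symm⟩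
  · intro hz
    obtain ⟨n, x, ⟨hxM, hxD⟩, rfl⟩ := Set.mem_iUnion.1 hz
    exact ⟨x, hxM, vD_eq hxD⟩

lemma image_measurable (hm : Measurable ((Ico (0:ℝ) 1).restrict v))
    (hl : ∀ x ∈ Ico (0:ℝ) 1, ∃ k l : ℕ, v x = (x + l) / 2^k)
    {M : Set ℝ} (hM : M ⊆ Ico (0:ℝ) 1) (hMm : MeasurableSet M) :
    MeasurableSet (v '' M) := by
  rw [image_eq hl hM]
  refine MeasurableSet.iUnion fun n => ?_
  exact measurable_affine_image _ (by positivity) (hMm.inter (measurable_pieceD hm n))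

lemma image_le_half (hm : Measurable ((Ico (0:ℝ) 1).restrict v))
    (hmap : Set.MapsTo v (Ico (0:ℝ) 1) (Ico (0:ℝ) 1))
    (hl : ∀ x ∈ Ico (0:ℝ) 1, ∃ k l : ℕ, v x = (x + l) / 2^k)
    {B : Set ℝ} (hB : B ⊆ Ico (0:ℝ) 1 \ fixSet v) (hBm : MeasurableSet B) :
    volume (v '' B) ≤ 2⁻¹ * volume B := by
  have hBI : B ⊆ Ico (0:ℝ) 1 := fun x hx => (hB hx).1
  rw [image_eq hl hBI]
  calc volume (⋃ n, affF n '' (B ∩ pieceD v n))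
      ≤ ∑' n, volume (affF n '' (B ∩ pieceD v n)) := measure_iUnion_le _
    _ ≤ ∑' n, 2⁻¹ * volume (B ∩ pieceD v n) := by
        refine ENNReal.tsum_le_tsum fun n => ?_
        rcases Nat.eq_zero_or_pos (Nat.unpair n).1 with h0 | hpos
        · -- piece with k = 0 is disjoint from B
          have hempty : B ∩ pieceD v n = ∅ := by
            ext x
            simp only [Set.mem_inter_iff, Set.mem_empty_iff_false, iff_false, not_and]
            intro hxB hxD
            have hC := hxD.1
            have hval : v x = x + ((Nat.unpair n).2 : ℝ) := by
              have := hC.2; rwa [h0, pow_zero, div_one] at this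
            have hvx := hmap (hB hxB).1
            have hx0 : (0:ℝ) ≤ x := (hB hxB).1.1
            have hlt : ((Nat.unpair n).2 : ℝ) < 1 := by
              have := hvx.2; nlinarith [hval]
            have hl0 : (Nat.unpair n).2 = 0 := by exact_mod_cast Nat.lt_one_iff.1 (by exact_mod_cast hlt)
            have : v x = x := by rw [hval, hl0]; simp
            exact (hB hxB).2 ⟨(hB hxB).1, this⟩
          simp [hempty]
        · unfold affF
          rw [vol_affine_image]
          gcongr
          have h1 : |((2:ℝ) ^ (Nat.unpair n).1)⁻¹| = ((2:ℝ) ^ (Nat.unpair n).1)⁻¹ := by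
            rw [abs_of_nonneg]; positivity
          rw [h1]
          have h2 : ((2:ℝ) ^ (Nat.unpair n).1)⁻¹ ≤ 2⁻¹ := by
            rw [inv_le_inv₀ (by positivity) (by norm_num)]
            calc (2:ℝ) = 2 ^ 1 := (pow_one 2).symm
              _ ≤ 2 ^ (Nat.unpair n).1 := by
                  apply pow_le_pow_right₀ (by norm_num) hpos
          calc ENNReal.ofReal ((2:ℝ) ^ (Nat.unpair n).1)⁻¹ ≤ ENNReal.ofReal 2⁻¹ :=
              ENNReal.ofReal_le_ofReal h2
            _ = 2⁻¹ := by
                rw [ENNReal.ofReal_inv_of_pos (by norm_num)]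
                norm_num
    _ = 2⁻¹ * ∑' n, volume (B ∩ pieceD v n) := ENNReal.tsum_mul_left
    _ = 2⁻¹ * volume (⋃ n, B ∩ pieceD v n) := by
        rw [measure_iUnion]
        · exact fun n m hnm => (pieceD_disjoint hnm).mono inf_le_right inf_le_right
        · exact fun n => hBm.inter (measurable_pieceD hm n)
    _ = 2⁻¹ * volume B := by
        rw [← Set.inter_iUnion, Set.inter_eq_left.2 (hBI.trans (pieceD_cover hl))]

/-! ### orbit lemmas -/

lemma orbIter_subset_Ico (hmap : Set.MapsTo v (Ico (0:ℝ) 1) (Ico (0:ℝ) 1))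
    {A : Set ℝ} (hA : A ⊆ Ico (0:ℝ) 1) : ∀ n, orbIter v A n ⊆ Ico (0:ℝ) 1 := by
  intro n
  induction n with
  | zero => exact hA
  | succ n ih => exact fun z ⟨x, hx, he⟩ => he ▸ hmap (ih hx)

lemma orbIter_measurable (hm : Measurable ((Ico (0:ℝ) 1).restrict v))
    (hmap : Set.MapsTo v (Ico (0:ℝ) 1) (Ico (0:ℝ) 1))
    (hl : ∀ x ∈ Ico (0:ℝ) 1, ∃ k l : ℕ, v x = (x + l) / 2^k)
    {A : Set ℝ} (hA : A ⊆ Ico (0:ℝ) 1) (hAm : MeasurableSet A) :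
    ∀ n, MeasurableSet (orbIter v A n) := by
  intro n
  induction n with
  | zero => exact hAm
  | succ n ih => exact image_measurable hm hl (orbIter_subset_Ico hmap hA n) ih

lemma orbSet_subset_Ico (hmap : Set.MapsTo v (Ico (0:ℝ) 1) (Ico (0:ℝ) 1))
    {A : Set ℝ} (hA : A ⊆ Ico (0:ℝ) 1) : orbSet v A ⊆ Ico (0:ℝ) 1 :=
  Set.iUnion_subset (orbIter_subset_Ico hmap hA)

lemma orbSet_measurable (hm : Measurable ((Ico (0:ℝ) 1).restrict v))
    (hmap : Set.MapsTo v (Ico (0:ℝ) 1) (Ico (0:ℝ) 1))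
    (hl : ∀ x ∈ Ico (0:ℝ) 1, ∃ k l : ℕ, v x = (x + l) / 2^k)
    {A : Set ℝ} (hA : A ⊆ Ico (0:ℝ) 1) (hAm : MeasurableSet A) :
    MeasurableSet (orbSet v A) :=
  MeasurableSet.iUnion (orbIter_measurable hm hmap hl hA hAm)

lemma self_subset_orbSet {A : Set ℝ} : A ⊆ orbSet v A :=
  Set.subset_iUnion (orbIter v A) 0

lemma image_orbSet_subset {A : Set ℝ} : v '' orbSet v A ⊆ orbSet v A := by
  rw [orbSet, Set.image_iUnion]
  exact Set.iUnion_subset fun n => Set.subset_iUnion (orbIter v A) (n + 1)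

lemma orbIter_mono {A B : Set ℝ} (h : A ⊆ B) : ∀ n, orbIter v A n ⊆ orbIter v B n := by
  intro n
  induction n with
  | zero => exact h
  | succ n ih => exact Set.image_mono ih

lemma orbSet_mono {A B : Set ℝ} (h : A ⊆ B) : orbSet v A ⊆ orbSet v B :=
  Set.iUnion_mono (orbIter_mono h)

lemma orbSet_union {A B : Set ℝ} : orbSet v (A ∪ B) = orbSet v A ∪ orbSet v B := by
  have h : ∀ n, orbIter v (A ∪ B) n = orbIter v A n ∪ orbIter v B n := by
    intro n
    induction n with
    | zero => rfl
    | succ n ih => rw [orbIter, ih, Set.image_union]; rfl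
  simp only [orbSet, h, Set.iUnion_union_distrib]

/-- Key measure estimate: the orbit of `A` has measure at most `2 μ(A)`. -/
lemma orbSet_volume_le (hm : Measurable ((Ico (0:ℝ) 1).restrict v))
    (hmap : Set.MapsTo v (Ico (0:ℝ) 1) (Ico (0:ℝ) 1))
    (hl : ∀ x ∈ Ico (0:ℝ) 1, ∃ k l : ℕ, v x = (x + l) / 2^k)
    {A : Set ℝ} (hA : A ⊆ Ico (0:ℝ) 1) (hAm : MeasurableSet A) :
    volume (orbSet v A) ≤ 2 * volume A := by
  set B : ℕ → Set ℝ := fun n => orbIter v A n \ fixSet v with hBdef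
  have hBsub : ∀ n, B n ⊆ Ico (0:ℝ) 1 \ fixSet v := fun n =>
    Set.diff_subset_diff_left (orbIter_subset_Ico hmap hA n)
  have hBm : ∀ n, MeasurableSet (B n) := fun n =>
    (orbIter_measurable hm hmap hl hA hAm n).diff (measurable_fixSet hm)
  have hstep : ∀ n, orbIter v A (n+1) ⊆ orbIter v A n ∪ v '' B n := by
    rintro n z ⟨x, hx, rfl⟩
    by_cases hfix : x ∈ fixSet v
    · exact Or.inl (by rw [hfix.2]; exact hx)
    · exact Or.inr ⟨x, ⟨hx, hfix⟩, rfl⟩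
  have hstep2 : ∀ n, B (n+1) ⊆ v '' B n := by
    rintro n z ⟨⟨x, hx, rfl⟩, hz⟩
    by_cases hfix : x ∈ fixSet v
    · exact absurd (show v x ∈ fixSet v by rw [hfix.2]; exact hfix) hz
    · exact ⟨x, ⟨hx, hfix⟩, rfl⟩
  have himg : ∀ n, volume (v '' B n) ≤ 2⁻¹ * volume (B n) := fun n =>
    image_le_half hm hmap hl (hBsub n) (hBm n)
  have hBvol : ∀ n, volume (B n) ≤ 2⁻¹ ^ n * volume A := by
    intro n
    induction n with
    | zero => simpa [hBdef, orbIter] using measure_mono (Set.diff_subset : A \ fixSet v ⊆ A)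
    | succ n ih =>
        calc volume (B (n+1)) ≤ volume (v '' B n) := measure_mono (hstep2 n)
          _ ≤ 2⁻¹ * volume (B n) := himg n
          _ ≤ 2⁻¹ * (2⁻¹ ^ n * volume A) := by gcongr
          _ = 2⁻¹ ^ (n+1) * volume A := by ring
  have hcover : orbSet v A ⊆ A ∪ ⋃ n, v '' B n := by
    refine Set.iUnion_subset fun n => ?_
    induction n with
    | zero => exact fun x hx => Or.inl hx
    | succ n ih =>
        refine (hstep n).trans ?_
        refine Set.union_subset ih ?_
        exact fun x hx => Or.inr (Set.mem_iUnion.2 ⟨n, hx⟩)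
  calc volume (orbSet v A) ≤ volume (A ∪ ⋃ n, v '' B n) := measure_mono hcover
    _ ≤ volume A + volume (⋃ n, v '' B n) := measure_union_le _ _
    _ ≤ volume A + ∑' n, volume (v '' B n) := by gcongr; exact measure_iUnion_le _
    _ ≤ volume A + ∑' n, 2⁻¹ ^ (n+1) * volume A := by
        gcongr with n
        calc volume (v '' B n) ≤ 2⁻¹ * volume (B n) := himg n
          _ ≤ 2⁻¹ * (2⁻¹ ^ n * volume A) := by gcongr; exact hBvol n
          _ = 2⁻¹ ^ (n+1) * volume A := by ring
    _ = volume A + (∑' (n : ℕ), (2:ENNReal)⁻¹ ^ (n+1)) * volume A := by rw [ENNReal.tsum_mul_right]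
    _ = volume A + volume A := by
        congr 1
        have : (∑' (n : ℕ), (2:ENNReal)⁻¹ ^ (n+1)) = 2⁻¹ * ∑' (n : ℕ), (2:ENNReal)⁻¹ ^ n := by
          rw [← ENNReal.tsum_mul_left]
          congr 1; funext n; ring
        rw [this, ENNReal.tsum_geometric, ENNReal.one_sub_inv_two, inv_inv,
          ENNReal.inv_mul_cancel two_ne_zero ENNReal.ofNat_ne_top, one_mul]
    _ = 2 * volume A := (two_mul _).symm

lemma orbSet_empty : orbSet v (∅ : Set ℝ) = ∅ := by
  have h : ∀ n, orbIter v (∅ : Set ℝ) n = ∅ := by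
    intro n
    induction n with
    | zero => rfl
    | succ n ih => rw [orbIter, ih, Set.image_empty]
  simp [orbSet, h]

lemma St_mono {c₁ c₂ : ℝ} (h : c₁ ≤ c₂) : St v c₁ ⊆ St v c₂ :=
  orbSet_mono (fun x hx => ⟨by linarith [hx.1], hx.2⟩)

lemma St_diff_le (hm : Measurable ((Ico (0:ℝ) 1).restrict v))
    (hmap : Set.MapsTo v (Ico (0:ℝ) 1) (Ico (0:ℝ) 1))
    (hl : ∀ x ∈ Ico (0:ℝ) 1, ∃ k l : ℕ, v x = (x + l) / 2^k)
    {c₁ c₂ : ℝ} (h0 : 0 ≤ c₁) (h12 : c₁ ≤ c₂) (h1 : c₂ ≤ 1) :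
    volume (St v c₂ \ St v c₁) ≤ ENNReal.ofReal (2 * (c₂ - c₁)) := by
  have hsplit : Ico (1-c₂) 1 ⊆ Ico (1-c₂) (1-c₁) ∪ Ico (1-c₁) 1 := by
    intro x hx
    rcases lt_or_ge x (1-c₁) with h | h
    · exact Or.inl ⟨hx.1, h⟩
    · exact Or.inr ⟨h, hx.2⟩
  have hincl : St v c₂ \ St v c₁ ⊆ orbSet v (Ico (1-c₂) (1-c₁)) := by
    intro x hx
    have : x ∈ orbSet v (Ico (1-c₂) (1-c₁)) ∪ orbSet v (Ico (1-c₁) 1) := by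
      rw [← orbSet_union]
      exact orbSet_mono hsplit hx.1
    rcases this with h | h
    · exact h
    · exact absurd h hx.2
  have hseed : Ico (1-c₂) (1-c₁) ⊆ Ico (0:ℝ) 1 := by
    intro x hx
    exact ⟨by linarith [hx.1], by linarith [hx.2]⟩
  calc volume (St v c₂ \ St v c₁) ≤ volume (orbSet v (Ico (1-c₂) (1-c₁))) :=
        measure_mono hincl
    _ ≤ 2 * volume (Ico (1-c₂) (1-c₁)) :=
        orbSet_volume_le hm hmap hl hseed measurableSet_Ico
    _ = ENNReal.ofReal (2 * (c₂ - c₁)) := by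
        rw [Real.volume_Ico, ENNReal.ofReal_mul (by norm_num : (0:ℝ) ≤ 2)]
        congr 1
        · exact (ENNReal.ofReal_ofNat 2).symm
        · congr 1; ring

theorem main (v : ℝ → ℝ) (hv : MemWI2 v) :
    ∃ vt : ℝ → (ℝ → ℝ),
      (∀ t ∈ Icc (0:ℝ) 1, MemWI2 (vt t)) ∧
      vt 0 = v ∧
      Set.EqOn (vt 1) id (Ico (0:ℝ) 1) ∧
      (∀ s ∈ Icc (0:ℝ) 1,
        Filter.Tendsto (fun t => volume {x ∈ Ico (0:ℝ) 1 | vt t x ≠ vt s x})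
          (nhdsWithin s (Icc (0:ℝ) 1)) (nhds 0)) := by
  obtain ⟨hm, hmap, hinj, hl⟩ := hv
  refine ⟨vchain v, ?_, ?_, ?_, ?_⟩
  · -- membership in WI₂
    intro t ht
    set S := St v (1 - t) with hSdef
    have hseed : Ico (1-(1-t)) 1 ⊆ Ico (0:ℝ) 1 := fun x hx => ⟨by
      have := hx.1; have := ht.1; linarith, hx.2⟩
    have hSsub : S ⊆ Ico (0:ℝ) 1 := orbSet_subset_Ico hmap hseed
    have hSm : MeasurableSet S := orbSet_measurable hm hmap hl hseed measurableSet_Ico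
    have hfwd : v '' S ⊆ S := image_orbSet_subset
    refine ⟨?_, ?_, ?_, ?_⟩
    · have heq : (Ico (0:ℝ) 1).restrict (vchain v t) =
          fun y : Ico (0:ℝ) 1 => if (y:ℝ) ∈ Ico (0:ℝ) 1 \ S then (y:ℝ) else v y := rfl
      rw [heq]
      exact Measurable.ite ((measurableSet_Ico.diff hSm).preimage measurable_subtype_coe)
        measurable_subtype_coe hm
    · intro x hx
      unfold vchain
      by_cases h : x ∈ Ico (0:ℝ) 1 \ S
      · rw [if_pos h]; exact hx
      · rw [if_neg h]; exact hmap hx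
    · intro x hx y hy he
      unfold vchain at he
      by_cases h1 : x ∈ Ico (0:ℝ) 1 \ S <;> by_cases h2 : y ∈ Ico (0:ℝ) 1 \ S
      · rwa [if_pos h1, if_pos h2] at he
      · rw [if_pos h1, if_neg h2] at he
        have hyS : y ∈ S := by
          by_contra hc
          exact h2 ⟨hy, hc⟩
        exact absurd (by rw [he]; exact hfwd ⟨y, hyS, rfl⟩ : x ∈ S) h1.2
      · rw [if_neg h1, if_pos h2] at he
        have hxS : x ∈ S := by
          by_contra hc
          exact h1 ⟨hx, hc⟩
        exact absurd (by rw [← he]; exact hfwd ⟨x, hxS, rfl⟩ : y ∈ S) h2.2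
      · rw [if_neg h1, if_neg h2] at he
        exact hinj hx hy he
    · intro x hx
      unfold vchain
      by_cases h : x ∈ Ico (0:ℝ) 1 \ S
      · exact ⟨0, 0, by rw [if_pos h]; simp⟩
      · rw [if_neg h]; exact hl x hx
  · -- `v₀ = v`
    funext x
    unfold vchain
    have hsub : Ico (0:ℝ) 1 ⊆ St v (1 - 0) := by
      have h1 : Ico (1 - (1 - (0:ℝ))) 1 = Ico 0 1 := by norm_num
      intro x hx
      exact self_subset_orbSet (by rw [h1]; exact hx)
    have hnot : x ∉ Ico (0:ℝ) 1 \ St v (1 - 0) := fun hc => hc.2 (hsub hc.1)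
    rw [if_neg hnot]
  · -- `v₁ = id` on `[0,1)`
    intro x hx
    have hempty : St v (1 - 1) = ∅ := by
      have h1 : Ico (1 - (1 - (1:ℝ))) 1 = (∅ : Set ℝ) := by norm_num
      rw [St, h1, orbSet_empty]
    have hmem : x ∈ Ico (0:ℝ) 1 \ St v (1 - 1) := by
      rw [hempty]; exact ⟨hx, notMem_empty x⟩
    unfold vchain
    rw [if_pos hmem]
    rfl
  · -- continuity of the chain
    intro s hs
    have key : ∀ t ∈ Icc (0:ℝ) 1,
        volume {x ∈ Ico (0:ℝ) 1 | vchain v t x ≠ vchain v s x} ≤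
          ENNReal.ofReal (2 * |t - s|) := by
      intro t ht
      set c₁ := 1 - max t s with hc1
      set c₂ := 1 - min t s with hc2
      have h0 : 0 ≤ c₁ := by
        have := max_le ht.2 hs.2; simp only [hc1]; linarith
      have h12 : c₁ ≤ c₂ := by
        have := min_le_max (a := t) (b := s); simp only [hc1, hc2]; linarith
      have h1 : c₂ ≤ 1 := by
        have := le_min ht.1 hs.1; simp only [hc2]; linarith
      have hsub : {x ∈ Ico (0:ℝ) 1 | vchain v t x ≠ vchain v s x} ⊆
          St v c₂ \ St v c₁ := by
        rintro x ⟨hx, hne⟩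
        have hmt : St v (1 - t) ⊆ St v c₂ := St_mono (by simp only [hc2]; linarith [min_le_left t s])
        have hms : St v (1 - s) ⊆ St v c₂ := St_mono (by simp only [hc2]; linarith [min_le_right t s])
        have hmt' : St v c₁ ⊆ St v (1 - t) := St_mono (by simp only [hc1]; linarith [le_max_left t s])
        have hms' : St v c₁ ⊆ St v (1 - s) := St_mono (by simp only [hc1]; linarith [le_max_right t s])
        by_cases ht2 : x ∈ St v (1 - t) <;> by_cases hs2 : x ∈ St v (1 - s)
        · exfalso
          apply hne
          unfold vchain
          rw [if_neg (fun hc => hc.2 ht2), if_neg (fun hc => hc.2 hs2)]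
        · exact ⟨hmt ht2, fun hc => hs2 (hms' hc)⟩
        · exact ⟨hms hs2, fun hc => ht2 (hmt' hc)⟩
        · exfalso
          apply hne
          unfold vchain
          rw [if_pos ⟨hx, ht2⟩, if_pos ⟨hx, hs2⟩]
      calc volume {x ∈ Ico (0:ℝ) 1 | vchain v t x ≠ vchain v s x}
          ≤ volume (St v c₂ \ St v c₁) := measure_mono hsub
        _ ≤ ENNReal.ofReal (2 * (c₂ - c₁)) := St_diff_le hm hmap hl h0 h12 h1
        _ = ENNReal.ofReal (2 * |t - s|) := by
            congr 1
            have : c₂ - c₁ = max t s - min t s := by simp only [hc1, hc2]; ring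
            rw [this, max_sub_min_eq_abs, abs_sub_comm]
    have hlim : Tendsto (fun t => ENNReal.ofReal (2 * |t - s|))
        (nhdsWithin s (Icc (0:ℝ) 1)) (nhds 0) := by
      have hcont : Continuous fun t : ℝ => 2 * |t - s| := by continuity
      have h2 : Tendsto (fun t : ℝ => 2 * |t - s|) (nhdsWithin s (Icc (0:ℝ) 1))
          (nhds 0) := by
        have := (hcont.tendsto s).mono_left
          (nhdsWithin_le_nhds : nhdsWithin s (Icc (0:ℝ) 1) ≤ nhds s)
        simpa using this
      simpa using ENNReal.tendsto_ofReal h2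
    refine tendsto_of_tendsto_of_tendsto_of_le_of_le' tendsto_const_nhds hlim ?_ ?_
    · exact Filter.Eventually.of_forall fun t => zero_le
    · exact Filter.eventually_of_mem self_mem_nhdsWithin fun t ht => key t ht

end WI2Chain

/-- Every `v ∈ WI₂` can be connected to the identity by a chain
`{v_t}_{t∈[0,1]}` in `WI₂` which is continuous in the measure of the disagreement set. -/
theorem exists_WI2_chain_to_id (v : ℝ → ℝ) (hv : MemWI2 v) :
    ∃ vt : ℝ → (ℝ → ℝ),
      (∀ t ∈ Icc (0:ℝ) 1, MemWI2 (vt t)) ∧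
      vt 0 = v ∧
      Set.EqOn (vt 1) id (Ico (0:ℝ) 1) ∧
      (∀ s ∈ Icc (0:ℝ) 1,
        Filter.Tendsto (fun t => volume {x ∈ Ico (0:ℝ) 1 | vt t x ≠ vt s x})
          (nhdsWithin s (Icc (0:ℝ) 1)) (nhds 0)) :=
  WI2Chain.main v hv

end
end

section
/- Let W₁ and W₂ be regularized wavelet sets with wavelet induced isomorphisms h₁ = h̃_{W₁} and h₂ = h̃_{W₂}, and let ω' := {x ∈ [0,1) : h₁^{-1}(x) ≠ h₂^{-1}(x)}. Then μ(W₁ △ W₂) = 4π μ(ω'), where △ denotes symmetric difference. -/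
open MeasureTheory Set Real Filter
open scoped symmDiff Classical

noncomputable section

section AuxLemmas

-- basic facts
lemma E_measurable : MeasurableSet E := measurableSet_Ico.union measurableSet_Ico

lemma E_ne_zero {e : ℝ} (he : e ∈ E) : e ≠ 0 := by
  have hπ := Real.pi_pos
  rcases he with h | h
  · exact ne_of_lt (lt_of_lt_of_le (by linarith [h.2]) le_rfl)
  · exact ne_of_gt (lt_of_lt_of_le hπ h.1)

-- tau lemmas
lemma tau_mem_E (x : ℝ) : tau x ∈ E := by
  have h2 := Real.two_pi_pos
  have hx : 2*π*(x/(2*π)) = x := by field_simp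
  have hr : x - 2*π*(⌊x/(2*π)⌋:ℝ) = 2*π * Int.fract (x/(2*π)) := by
    rw [Int.fract, mul_sub, hx]
  have h0 : 0 ≤ x - 2*π*(⌊x/(2*π)⌋:ℝ) := by
    rw [hr]
    have := Int.fract_nonneg (x/(2*π))
    nlinarith
  have h1 : x - 2*π*(⌊x/(2*π)⌋:ℝ) < 2*π := by
    rw [hr]
    nlinarith [Int.fract_lt_one (x/(2*π))]
  unfold tau
  split_ifs with h
  · left; exact ⟨by linarith, by linarith⟩
  · right; exact ⟨by linarith [not_lt.1 h], by linarith⟩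

lemma tau_add_int (x : ℝ) (m : ℤ) : tau (x + 2*π*(m:ℝ)) = tau x := by
  have h2 : (2*π) ≠ 0 := ne_of_gt Real.two_pi_pos
  have hfl : ⌊(x + 2*π*(m:ℝ))/(2*π)⌋ = ⌊x/(2*π)⌋ + m := by
    rw [show (x + 2*π*(m:ℝ))/(2*π) = x/(2*π) + m by field_simp, Int.floor_add_intCast]
  have key : x + 2*π*(m:ℝ) - 2*π*((⌊x/(2*π)⌋:ℝ) + (m:ℝ)) = x - 2*π*(⌊x/(2*π)⌋:ℝ) := by ring
  unfold tau
  rw [hfl]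
  push_cast
  rw [key]

lemma tau_self {e : ℝ} (he : e ∈ E) : tau e = e := by
  have h2 := Real.two_pi_pos
  have hπ := Real.pi_pos
  rcases he with h | h
  · have hf : ⌊e/(2*π)⌋ = -1 := by
      rw [Int.floor_eq_iff (R := ℝ)]
      constructor
      · push_cast
        rw [neg_le, ← neg_div, div_le_one h2]
        linarith [h.1]
      · push_cast
        have : e/(2*π) < 0 := div_neg_of_neg_of_pos (by linarith [h.2]) h2
        linarith
    unfold tau
    rw [hf]
    push_cast
    rw [if_pos (by linarith [h.2])]
    ring
  · have hf : ⌊e/(2*π)⌋ = 0 := by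
      rw [Int.floor_eq_zero_iff]
      constructor
      · exact div_nonneg (by linarith [h.1]) h2.le
      · rw [div_lt_one h2]; exact h.2
    unfold tau
    rw [hf]
    push_cast
    rw [if_neg (by push_cast; simp; linarith [h.1])]
    ring

lemma tau_sub_exists (x : ℝ) : ∃ m : ℤ, tau x = x + 2*π*(m:ℝ) := by
  unfold tau
  split_ifs with h
  · exact ⟨-⌊x/(2*π)⌋ - 1, by push_cast; ring⟩
  · exact ⟨-⌊x/(2*π)⌋, by push_cast; ring⟩

lemma tau_eq_of_mem {x : ℝ} (m : ℤ) (h : x + 2*π*(m:ℝ) ∈ E) : tau x = x + 2*π*(m:ℝ) := by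
  rw [← tau_add_int x m, tau_self h]


lemma delta_spec (x : ℝ) : ∃ k : ℤ, delta x = (2:ℝ)^k * x := by
  unfold delta; split_ifs
  · exact ⟨_, rfl⟩
  · exact ⟨_, rfl⟩

lemma delta_mem_E {x : ℝ} (hx : x ≠ 0) : delta x ∈ E := by
  have hπ := Real.pi_pos
  rcases hx.lt_or_gt with hneg | hpos
  · rw [delta, if_neg (not_lt.2 hneg.le)]
    set k := ⌊Real.logb 2 (2*π/(-x))⌋ with hk
    have hxpos : 0 < -x := neg_pos.2 hneg
    have hq : (0:ℝ) < 2*π/(-x) := by positivity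
    have h1 : (2:ℝ)^k ≤ 2*π/(-x) := by
      have h := Int.floor_le (Real.logb 2 (2*π/(-x)))
      have h' := (Real.le_logb_iff_rpow_le one_lt_two hq).1 h
      rwa [Real.rpow_intCast] at h'
    have h2 : 2*π/(-x) < (2:ℝ)^k * 2 := by
      have h := Int.lt_floor_add_one (Real.logb 2 (2*π/(-x)))
      have h' := (Real.logb_lt_iff_lt_rpow one_lt_two hq).1 (by push_cast; exact_mod_cast h)
      rwa [show ((k+1:ℤ):ℝ) = (k:ℝ)+1 by push_cast; ring, Real.rpow_add two_pos,
        Real.rpow_intCast, Real.rpow_one] at h'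
    have hk2 : (0:ℝ) < (2:ℝ)^k := zpow_pos two_pos k
    have hA : (2:ℝ)^k * (-x) ≤ 2*π := by
      rw [le_div_iff₀ hxpos] at h1; linarith
    have hB : π < (2:ℝ)^k * (-x) := by
      rw [div_lt_iff₀ hxpos] at h2; nlinarith
    left
    constructor
    · nlinarith
    · nlinarith
  · rw [delta, if_pos hpos]
    set k := ⌈Real.logb 2 (π/x)⌉ with hk
    have hq : (0:ℝ) < π/x := by positivity
    have h1 : π/x ≤ (2:ℝ)^k := by
      have h := Int.le_ceil (Real.logb 2 (π/x))
      have h' := (Real.logb_le_iff_le_rpow one_lt_two hq).1 h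
      rwa [Real.rpow_intCast] at h'
    have h2 : (2:ℝ)^k < (2*π/x) := by
      have h := Int.ceil_lt_add_one (Real.logb 2 (π/x))
      have h'' : ((k:ℝ) - 1) < Real.logb 2 (π/x) := by
        have : (k:ℝ) < Real.logb 2 (π/x) + 1 := by exact_mod_cast h
        linarith
      have h' := (Real.lt_logb_iff_rpow_lt one_lt_two hq).1 h''
      rw [Real.rpow_sub two_pos, Real.rpow_intCast, Real.rpow_one] at h'
      rw [show 2*π/x = 2*(π/x) by ring]
      linarith
    have hk2 : (0:ℝ) < (2:ℝ)^k := zpow_pos two_pos k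
    right
    constructor
    · rw [div_le_iff₀ hpos] at h1; linarith
    · rw [lt_div_iff₀ hpos] at h2; nlinarith

lemma delta_two_pow_mul {x : ℝ} (hx : x ≠ 0) (m : ℤ) : delta ((2:ℝ)^m * x) = delta x := by
  have h2m : (0:ℝ) < (2:ℝ)^m := zpow_pos two_pos m
  have hlogm : Real.logb 2 ((2:ℝ)^m) = (m:ℝ) := by
    rw [← Real.rpow_intCast 2 m, Real.logb_rpow two_pos (by norm_num)]
  rcases hx.lt_or_gt with hneg | hpos
  · have h1 : (2:ℝ)^m * x < 0 := mul_neg_of_pos_of_neg h2m hneg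
    rw [delta, delta, if_neg (not_lt.2 h1.le), if_neg (not_lt.2 hneg.le)]
    have hxpos : (0:ℝ) < -x := neg_pos.2 hneg
    have hL : Real.logb 2 (2*π/(-((2:ℝ)^m*x))) = Real.logb 2 (2*π/(-x)) - (m:ℝ) := by
      rw [show 2*π/(-((2:ℝ)^m*x)) = (2*π/(-x))/((2:ℝ)^m) by rw [div_div]; congr 1; ring,
        Real.logb_div (ne_of_gt (div_pos Real.two_pi_pos hxpos)) (ne_of_gt h2m), hlogm]
    rw [hL, show Real.logb 2 (2*π/(-x)) - (m:ℝ) = Real.logb 2 (2*π/(-x)) - ((m:ℤ):ℝ) by norm_num,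
      Int.floor_sub_intCast, zpow_sub₀ (two_ne_zero)]
    field_simp
  · have h1 : 0 < (2:ℝ)^m * x := mul_pos h2m hpos
    rw [delta, delta, if_pos h1, if_pos hpos]
    have hL : Real.logb 2 (π/((2:ℝ)^m*x)) = Real.logb 2 (π/x) - (m:ℝ) := by
      rw [show π/((2:ℝ)^m*x) = (π/x)/((2:ℝ)^m) by rw [div_div, mul_comm],
        Real.logb_div (ne_of_gt (div_pos Real.pi_pos hpos)) (ne_of_gt h2m), hlogm]
    rw [hL, show Real.logb 2 (π/x) - (m:ℝ) = Real.logb 2 (π/x) - ((m:ℤ):ℝ) by norm_num,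
      Int.ceil_sub_intCast, zpow_sub₀ (two_ne_zero)]
    field_simp

lemma delta_self {e : ℝ} (he : e ∈ E) : delta e = e := by
  have hπ := Real.pi_pos
  rcases he with h | h
  · have hneg : e < 0 := by linarith [h.2]
    rw [delta, if_neg (not_lt.2 hneg.le)]
    have hne : (0:ℝ) < -e := by linarith
    have h0 : ⌊Real.logb 2 (2*π/(-e))⌋ = 0 := by
      rw [Int.floor_eq_zero_iff]
      constructor
      · apply Real.logb_nonneg one_lt_two
        rw [le_div_iff₀ hne]; linarith [h.1]
      · have hlt : 2*π/(-e) < 2 := by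
          rw [div_lt_iff₀ hne]; linarith [h.2]
        calc Real.logb 2 (2*π/(-e)) < Real.logb 2 2 :=
              Real.logb_lt_logb one_lt_two (by positivity) hlt
          _ = 1 := Real.logb_self_eq_one one_lt_two
    rw [h0]; norm_num
  · have hpos : 0 < e := lt_of_lt_of_le hπ h.1
    rw [delta, if_pos hpos]
    have h0 : ⌈Real.logb 2 (π/e)⌉ = 0 := by
      rw [Int.ceil_eq_zero_iff]
      constructor
      · have hgt : (2:ℝ)^(-1:ℝ) < π/e := by
          rw [Real.rpow_neg_one, show ((2:ℝ)⁻¹ = 1/2) by norm_num, div_lt_div_iff₀ two_pos hpos]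
          linarith [h.2]
        exact (Real.lt_logb_iff_rpow_lt one_lt_two (by positivity)).2 hgt
      · apply Real.logb_nonpos one_lt_two (by positivity)
        rw [div_le_one hpos]; exact h.1
    rw [h0]; norm_num

lemma delta_eq_of_mem {x : ℝ} (hx : x ≠ 0) (m : ℤ) (h : (2:ℝ)^m * x ∈ E) :
    delta x = (2:ℝ)^m * x := by
  rw [← delta_two_pow_mul hx m, delta_self h]

-- xiMap / xiInv lemmas
lemma xiMap_neg {e : ℝ} (h : e ∈ Ico (-(2*π)) (-π)) :
    xiMap e = e/(2*π) + 1 ∧ xiMap e ∈ Ico (0:ℝ) (1/2) := by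
  have hπ := Real.pi_pos
  have h2 := Real.two_pi_pos
  have hneg : e < 0 := by linarith [h.2]
  have heq : xiMap e = e/(2*π) + 1 := if_pos hneg
  refine ⟨heq, ?_, ?_⟩
  · rw [heq]
    have : (-1:ℝ) ≤ e/(2*π) := by
      rw [neg_le, ← neg_div, div_le_one h2]; linarith [h.1]
    linarith
  · rw [heq]
    have : e/(2*π) < -(1/2) := by
      rw [div_lt_iff₀ h2]; linarith [h.2]
    linarith

lemma xiMap_pos {e : ℝ} (h : e ∈ Ico π (2*π)) :
    xiMap e = e/(2*π) ∧ xiMap e ∈ Ico (1/2:ℝ) 1 := by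
  have hπ := Real.pi_pos
  have h2 := Real.two_pi_pos
  have hpos : 0 < e := by linarith [h.1]
  have heq : xiMap e = e/(2*π) := if_neg (not_lt.2 hpos.le)
  refine ⟨heq, ?_, ?_⟩
  · rw [heq, le_div_iff₀ h2]; linarith [h.1]
  · rw [heq, div_lt_one h2]; exact h.2

lemma xiMap_mem {e : ℝ} (he : e ∈ E) : xiMap e ∈ Ico (0:ℝ) 1 := by
  rcases he with h | h
  · have := (xiMap_neg h).2
    exact ⟨this.1, by linarith [this.2]⟩
  · have := (xiMap_pos h).2
    exact ⟨by linarith [this.1], this.2⟩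

lemma xiInv_xiMap {e : ℝ} (he : e ∈ E) : xiInv (xiMap e) = e := by
  have h2 := Real.two_pi_pos
  rcases he with h | h
  · obtain ⟨heq, hmem⟩ := xiMap_neg h
    rw [heq, xiInv, if_pos (by linarith [hmem.2] : e/(2*π) + 1 < 1/2)]
    field_simp
    ring
  · obtain ⟨heq, hmem⟩ := xiMap_pos h
    rw [heq, xiInv, if_neg (by rw [← heq]; exact not_lt.2 hmem.1)]
    field_simp

lemma xiInv_mem {t : ℝ} (ht : t ∈ Ico (0:ℝ) 1) : xiInv t ∈ E := by
  have hπ := Real.pi_pos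
  have h2 := Real.two_pi_pos
  rw [xiInv]
  split_ifs with h
  · left
    constructor
    · nlinarith [ht.1]
    · nlinarith
  · right
    constructor
    · nlinarith [not_lt.1 h]
    · nlinarith [ht.2]

lemma xiMap_xiInv {t : ℝ} (ht : t ∈ Ico (0:ℝ) 1) : xiMap (xiInv t) = t := by
  have hπ := Real.pi_pos
  have h2 := Real.two_pi_pos
  rw [xiInv]
  split_ifs with h
  · rw [xiMap, if_pos (by nlinarith : 2*π*(t-1) < 0)]
    field_simp
    ring
  · rw [xiMap, if_neg (by push_neg at h ⊢; nlinarith [ht.1] : ¬ (2*π*t < 0))]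
    field_simp

lemma xiMap_injOn : InjOn xiMap E := fun a ha b hb hab => by
  rw [← xiInv_xiMap ha, ← xiInv_xiMap hb, hab]

-- wavelet set structural lemmas
lemma mem_ne_zero {W : Set ℝ} (hD : DilPartition W) {w : ℝ} (hw : w ∈ W) : w ≠ 0 := by
  intro h0
  have : (0:ℝ) ∈ ⋃ k : ℤ, (fun x : ℝ => (2:ℝ)^k * x) '' W :=
    mem_iUnion.2 ⟨0, ⟨w, hw, by rw [h0]; ring⟩⟩
  rw [hD.1] at this
  exact this rfl

lemma tau_injOn {W : Set ℝ} (hT : TransPartition W) : InjOn tau W := by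
  intro a ha b hb hab
  obtain ⟨m, hm⟩ := tau_sub_exists a
  obtain ⟨l, hl⟩ := tau_sub_exists b
  rcases eq_or_ne m l with rfl | hne
  · have : a + 2*π*(m:ℝ) = b + 2*π*(m:ℝ) := by rw [← hm, ← hl, hab]
    linarith
  · exfalso
    have hb2 : b = a + 2*π*((m - l : ℤ):ℝ) := by push_cast; nlinarith [hm ▸ hl ▸ hab]
    have hmem1 : b ∈ (fun x : ℝ => x + 2*π*((m - l : ℤ):ℝ)) '' W := ⟨a, ha, hb2.symm⟩
    have hmem2 : b ∈ (fun x : ℝ => x + 2*π*((0:ℤ):ℝ)) '' W := ⟨b, hb, by push_cast; ring⟩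
    exact Set.disjoint_left.1 (hT.2 (sub_ne_zero.2 hne)) hmem1 hmem2

lemma tau_surjOn {W : Set ℝ} (hT : TransPartition W) : SurjOn tau W E := by
  intro e he
  have hu : e ∈ ⋃ k : ℤ, (fun x : ℝ => x + 2*π*(k:ℝ)) '' W := by rw [hT.1]; trivial
  obtain ⟨k, w, hw, hwk⟩ := mem_iUnion.1 hu
  refine ⟨w, hw, ?_⟩
  have hwk' : w + 2*π*(k:ℝ) = e := hwk
  rw [show tau w = tau (w + 2*π*(k:ℝ)) from (tau_add_int w k).symm, hwk', tau_self he]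

lemma delta_injOn {W : Set ℝ} (hD : DilPartition W) : InjOn delta W := by
  intro a ha b hb hab
  obtain ⟨p, hp⟩ := delta_spec a
  obtain ⟨q, hq⟩ := delta_spec b
  have hkey : (2:ℝ)^p * a = (2:ℝ)^q * b := by rw [← hp, ← hq, hab]
  rcases eq_or_ne p q with rfl | hne
  · exact mul_left_cancel₀ (ne_of_gt (zpow_pos two_pos p)) hkey
  · exfalso
    have hb2 : b = (2:ℝ)^(p - q) * a := by
      rw [zpow_sub₀ (two_ne_zero : (2:ℝ) ≠ 0)]
      field_simp at hkey ⊢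
      rw [mul_comm] at hkey
      linarith [hkey]
    have hmem1 : b ∈ (fun x : ℝ => (2:ℝ)^(p - q) * x) '' W := ⟨a, ha, hb2.symm⟩
    have hmem2 : b ∈ (fun x : ℝ => (2:ℝ)^(0:ℤ) * x) '' W := ⟨b, hb, by norm_num⟩
    exact Set.disjoint_left.1 (hD.2 (sub_ne_zero.2 hne)) hmem1 hmem2

lemma delta_surjOn {W : Set ℝ} (hD : DilPartition W) : SurjOn delta W E := by
  intro e he
  have he0 : e ≠ 0 := E_ne_zero he
  have hu : e ∈ ⋃ k : ℤ, (fun x : ℝ => (2:ℝ)^k * x) '' W := by rw [hD.1]; exact he0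
  obtain ⟨k, w, hw, hwk⟩ := mem_iUnion.1 hu
  have hw0 : w ≠ 0 := mem_ne_zero hD hw
  refine ⟨w, hw, ?_⟩
  have hwk' : (2:ℝ)^k * w = e := hwk
  rw [show delta w = delta ((2:ℝ)^k * w) from (delta_two_pow_mul hw0 k).symm, hwk',
    delta_self he]

-- hIso lemmas
lemma invFunOn_tau_spec {W : Set ℝ} (hT : TransPartition W) {e : ℝ} (he : e ∈ E) :
    Function.invFunOn tau W e ∈ W ∧ tau (Function.invFunOn tau W e) = e := by
  obtain ⟨w, hw, hwe⟩ := tau_surjOn hT he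
  exact Function.invFunOn_pos ⟨w, hw, hwe⟩

lemma invFunOn_delta_spec {W : Set ℝ} (hD : DilPartition W) {e : ℝ} (he : e ∈ E) :
    Function.invFunOn delta W e ∈ W ∧ delta (Function.invFunOn delta W e) = e := by
  obtain ⟨w, hw, hwe⟩ := delta_surjOn hD he
  exact Function.invFunOn_pos ⟨w, hw, hwe⟩

lemma hIso_mapsTo {W : Set ℝ} (hT : TransPartition W) (hD : DilPartition W)
    {t : ℝ} (ht : t ∈ Ico (0:ℝ) 1) : hIso W t ∈ Ico (0:ℝ) 1 := by
  have he : xiInv t ∈ E := xiInv_mem ht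
  exact xiMap_mem (tau_mem_E _)

lemma hIso_injOn {W : Set ℝ} (hT : TransPartition W) (hD : DilPartition W) :
    InjOn (hIso W) (Ico (0:ℝ) 1) := by
  intro t ht t' ht' htt'
  have he : xiInv t ∈ E := xiInv_mem ht
  have he' : xiInv t' ∈ E := xiInv_mem ht'
  obtain ⟨hwW, hwd⟩ := invFunOn_delta_spec hD he
  obtain ⟨hwW', hwd'⟩ := invFunOn_delta_spec hD he'
  have h1 : tau (Function.invFunOn delta W (xiInv t)) =
      tau (Function.invFunOn delta W (xiInv t')) :=
    xiMap_injOn (tau_mem_E _) (tau_mem_E _) htt'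
  have h2 : Function.invFunOn delta W (xiInv t) = Function.invFunOn delta W (xiInv t') :=
    tau_injOn hT hwW hwW' h1
  have h3 : xiInv t = xiInv t' := by rw [← hwd, ← hwd', h2]
  rw [← xiMap_xiInv ht, ← xiMap_xiInv ht', h3]

lemma invFunOn_hIso_eq {W : Set ℝ} (hT : TransPartition W) (hD : DilPartition W)
    {x : ℝ} (hx : x ∈ Ico (0:ℝ) 1) :
    Function.invFunOn (hIso W) (Ico (0:ℝ) 1) x =
      xiMap (delta (Function.invFunOn tau W (xiInv x))) := by
  have he : xiInv x ∈ E := xiInv_mem hx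
  obtain ⟨hwW, hwtau⟩ := invFunOn_tau_spec hT he
  set w := Function.invFunOn tau W (xiInv x) with hwdef
  have hw0 : w ≠ 0 := mem_ne_zero hD hwW
  have hdE : delta w ∈ E := delta_mem_E hw0
  have htI : xiMap (delta w) ∈ Ico (0:ℝ) 1 := xiMap_mem hdE
  have hht : hIso W (xiMap (delta w)) = x := by
    have h1 : xiInv (xiMap (delta w)) = delta w := xiInv_xiMap hdE
    have h2 : Function.invFunOn delta W (delta w) = w := by
      have hmem := Function.invFunOn_pos (⟨w, hwW, rfl⟩ : ∃ a ∈ W, delta a = delta w)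
      exact delta_injOn hD hmem.1 hwW hmem.2
    show xiMap (tau (Function.invFunOn delta W (xiInv (xiMap (delta w))))) = x
    rw [h1, h2, hwtau, xiMap_xiInv hx]
  have hmem := Function.invFunOn_pos
    (⟨xiMap (delta w), htI, hht⟩ : ∃ a ∈ Ico (0:ℝ) 1, hIso W a = x)
  exact hIso_injOn hT hD hmem.1 htI (hmem.2.trans hht.symm)

end AuxLemmas



-- measure lemmas
lemma tau_cond_iff (x : ℝ) (j : ℤ) : tau x = x + 2*π*(j:ℝ) ↔ x + 2*π*(j:ℝ) ∈ E :=
  ⟨fun h => h ▸ tau_mem_E x, fun h => tau_eq_of_mem j h⟩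

lemma tau_image_spec {S : Set ℝ} (hS : MeasurableSet S) (hinj : InjOn tau S) :
    MeasurableSet (tau '' S) ∧ volume (tau '' S) = volume S := by
  classical
  set Sj : ℤ → Set ℝ := fun j => S ∩ ((fun x : ℝ => x + 2*π*(j:ℝ)) ⁻¹' E) with hSjdef
  have hmeas : ∀ j, MeasurableSet (Sj j) := fun j =>
    hS.inter (E_measurable.preimage (measurable_add_const _))
  have hUnion : (⋃ j, Sj j) = S := by
    apply Set.Subset.antisymm
    · exact iUnion_subset fun j => inter_subset_left
    · intro x hx
      obtain ⟨m, hm⟩ := tau_sub_exists x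
      exact mem_iUnion.2 ⟨m, hx, (tau_cond_iff x m).1 hm⟩
  have hdisj : Pairwise (Function.onFun Disjoint Sj) := by
    intro j l hjl
    rw [Function.onFun, Set.disjoint_left]
    rintro x ⟨hxS, hxj⟩ ⟨_, hxl⟩
    have h1 : tau x = x + 2*π*(j:ℝ) := (tau_cond_iff x j).2 hxj
    have h2 : tau x = x + 2*π*(l:ℝ) := (tau_cond_iff x l).2 hxl
    have : (j:ℝ) = (l:ℝ) := by
      have h2π := Real.two_pi_pos
      nlinarith [h1 ▸ h2]
    exact hjl (by exact_mod_cast this)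
  have himage : ∀ j : ℤ, tau '' Sj j = (fun y : ℝ => y + (-(2*π*(j:ℝ)))) ⁻¹' (Sj j) := by
    intro j
    ext y
    constructor
    · rintro ⟨x, hx, rfl⟩
      have : tau x = x + 2*π*(j:ℝ) := (tau_cond_iff x j).2 hx.2
      simpa [this] using hx
    · intro hy
      refine ⟨y + (-(2*π*(j:ℝ))), hy, ?_⟩
      have : tau (y + (-(2*π*(j:ℝ)))) = y + (-(2*π*(j:ℝ))) + 2*π*(j:ℝ) :=
        (tau_cond_iff _ j).2 (by simpa using hy.2)
      rw [this]; ring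
  have hmeasI : ∀ j, MeasurableSet (tau '' Sj j) := fun j => by
    rw [himage j]
    exact (hmeas j).preimage (measurable_add_const _)
  have hvolI : ∀ j, volume (tau '' Sj j) = volume (Sj j) := fun j => by
    rw [himage j]
    rw [show (fun y : ℝ => y + (-(2*π*(j:ℝ)))) = (fun y : ℝ => (-(2*π*(j:ℝ))) + y) from
      funext fun y => add_comm _ _]
    exact measure_preimage_add volume _ _
  have hdisjI : Pairwise (Function.onFun Disjoint fun j => tau '' Sj j) := by
    intro j l hjl
    rw [Function.onFun, Set.disjoint_left]
    rintro y ⟨x, hx, rfl⟩ ⟨x', hx', hxx'⟩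
    have hxS : x ∈ S := hx.1
    have hx'S : x' ∈ S := hx'.1
    have : x' = x := hinj hx'S hxS hxx'
    subst this
    exact Set.disjoint_left.1 (hdisj hjl) hx hx'
  have himg_union : tau '' S = ⋃ j, tau '' Sj j := by
    rw [← image_iUnion, hUnion]
  constructor
  · rw [himg_union]; exact MeasurableSet.iUnion hmeasI
  · calc volume (tau '' S) = volume (⋃ j, tau '' Sj j) := by rw [himg_union]
      _ = ∑' j : ℤ, volume (tau '' Sj j) := measure_iUnion hdisjI hmeasI
      _ = ∑' j : ℤ, volume (Sj j) := tsum_congr hvolI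
      _ = volume (⋃ j, Sj j) := (measure_iUnion hdisj hmeas).symm
      _ = volume S := by rw [hUnion]

lemma xiMap_image_volume {F : Set ℝ} (hF : MeasurableSet F) (hFE : F ⊆ E) :
    volume F = ENNReal.ofReal (2*π) * volume (xiMap '' F) := by
  have hπ := Real.pi_pos
  have h2 := Real.two_pi_pos
  have h2ne : (2*π) ≠ 0 := ne_of_gt h2
  set Fn := F ∩ Iio (0:ℝ) with hFndef
  set Fp := F ∩ Ici (0:ℝ) with hFpdef
  have hFnm : MeasurableSet Fn := hF.inter measurableSet_Iio
  have hFpm : MeasurableSet Fp := hF.inter measurableSet_Ici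
  have hFn_sub : Fn ⊆ Ico (-(2*π)) (-π) := by
    rintro x ⟨hxF, hx0⟩
    rcases hFE hxF with h | h
    · exact h
    · exact absurd h.1 (by simp only [mem_Iio] at hx0; push_neg; nlinarith)
  have hFp_sub : Fp ⊆ Ico π (2*π) := by
    rintro x ⟨hxF, hx0⟩
    rcases hFE hxF with h | h
    · exact absurd h.2 (by simp only [mem_Ici] at hx0; push_neg; nlinarith)
    · exact h
  have hFn_img : xiMap '' Fn = (fun y : ℝ => 2*π*(y-1)) ⁻¹' Fn := by
    ext y
    constructor
    · rintro ⟨x, hx, rfl⟩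
      have heq := (xiMap_neg (hFn_sub hx)).1
      rw [heq]
      simp only [Set.mem_preimage]
      rw [show 2*π*(x/(2*π) + 1 - 1) = x by field_simp; ring]
      exact hx
    · intro hy
      refine ⟨2*π*(y-1), hy, ?_⟩
      have heq := (xiMap_neg (hFn_sub hy)).1
      rw [heq]
      field_simp
      ring
  have hFp_img : xiMap '' Fp = (fun y : ℝ => 2*π*y) ⁻¹' Fp := by
    ext y
    constructor
    · rintro ⟨x, hx, rfl⟩
      have heq := (xiMap_pos (hFp_sub hx)).1
      rw [heq]
      simp only [Set.mem_preimage]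
      rw [show 2*π*(x/(2*π)) = x by field_simp]
      exact hx
    · intro hy
      refine ⟨2*π*y, hy, ?_⟩
      have heq := (xiMap_pos (hFp_sub hy)).1
      rw [heq]
      field_simp
  have hvol_n : volume (xiMap '' Fn) = ENNReal.ofReal (2*π)⁻¹ * volume Fn := by
    rw [hFn_img]
    rw [show (fun y : ℝ => 2*π*(y-1)) = (fun z : ℝ => z + (-(2*π))) ∘ (fun y : ℝ => (2*π)*y)
      from funext fun y => by simp [Function.comp]; ring]
    rw [Set.preimage_comp]
    rw [Real.volume_preimage_mul_left h2ne]
    congr 1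
    · rw [abs_of_pos (by positivity : (0:ℝ) < (2*π)⁻¹)]
    · rw [show (fun z : ℝ => z + (-(2*π))) = (fun z : ℝ => (-(2*π)) + z) from
        funext fun z => add_comm _ _]
      exact measure_preimage_add volume _ _
  have hvol_p : volume (xiMap '' Fp) = ENNReal.ofReal (2*π)⁻¹ * volume Fp := by
    rw [hFp_img, Real.volume_preimage_mul_left h2ne]
    congr 1
    rw [abs_of_pos (by positivity : (0:ℝ) < (2*π)⁻¹)]
  have hmn : MeasurableSet (xiMap '' Fn) := by
    rw [hFn_img]
    exact hFnm.preimage ((measurable_id.sub_const 1).const_mul (2*π))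
  have hmp : MeasurableSet (xiMap '' Fp) := by
    rw [hFp_img]
    exact hFpm.preimage (measurable_id.const_mul (2*π))
  have hdisj_img : Disjoint (xiMap '' Fn) (xiMap '' Fp) := by
    apply Set.disjoint_left.2
    rintro y ⟨x, hx, rfl⟩ ⟨x', hx', hxx'⟩
    have h1 := (xiMap_neg (hFn_sub hx)).2.2
    have h2' := (xiMap_pos (hFp_sub hx')).2.1
    rw [hxx'] at h2'
    linarith
  have hdisj_F : Disjoint Fn Fp := by
    apply Set.disjoint_left.2
    rintro x ⟨_, hx1⟩ ⟨_, hx2⟩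
    simp only [mem_Iio] at hx1
    simp only [mem_Ici] at hx2
    linarith
  have hF_eq : F = Fn ∪ Fp := by
    rw [hFndef, hFpdef, ← inter_union_distrib_left, Iio_union_Ici, inter_univ]
  have himg_eq : xiMap '' F = xiMap '' Fn ∪ xiMap '' Fp := by
    rw [hF_eq, image_union]
  rw [himg_eq, measure_union hdisj_img hmp, hvol_n, hvol_p, ← mul_add,
    ← measure_union hdisj_F hFpm, ← hF_eq, ← mul_assoc, ← ENNReal.ofReal_mul h2.le,
    mul_inv_cancel₀ h2ne, ENNReal.ofReal_one, one_mul]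


/-- For regularized wavelet sets `W₁, W₂` with induced isomorphisms
`h₁, h₂` and `ω' = {x ∈ [0,1) : h₁⁻¹(x) ≠ h₂⁻¹(x)}`, one has `μ(W₁ △ W₂) = 4π μ(ω')`. -/
theorem volume_symmDiff_eq_four_pi_mul (W₁ W₂ : Set ℝ)
    (h₁ : IsRegularizedWaveletSet W₁) (h₂ : IsRegularizedWaveletSet W₂) :
    volume (W₁ ∆ W₂) =
      ENNReal.ofReal (4*π) *
        volume {x ∈ Ico (0:ℝ) 1 |
          Function.invFunOn (hIso W₁) (Ico (0:ℝ) 1) x ≠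
            Function.invFunOn (hIso W₂) (Ico (0:ℝ) 1) x} := by
  obtain ⟨hW₁m, hT₁, hD₁⟩ := h₁
  obtain ⟨hW₂m, hT₂, hD₂⟩ := h₂
  have hπ := Real.pi_pos
  set Ω := {x ∈ Ico (0:ℝ) 1 |
      Function.invFunOn (hIso W₁) (Ico (0:ℝ) 1) x ≠
        Function.invFunOn (hIso W₂) (Ico (0:ℝ) 1) x} with hΩdef
  set Fs := {e ∈ E | Function.invFunOn tau W₁ e ≠ Function.invFunOn tau W₂ e} with hFsdef
  have htau_img : ∀ (V₁ V₂ : Set ℝ), TransPartition V₁ → TransPartition V₂ →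
      tau '' (V₁ \ V₂) =
        {e ∈ E | Function.invFunOn tau V₁ e ≠ Function.invFunOn tau V₂ e} := by
    intro V₁ V₂ hT hT'
    ext e
    constructor
    · rintro ⟨w, ⟨hw1, hw2⟩, rfl⟩
      have heE : tau w ∈ E := tau_mem_E w
      obtain ⟨hu1W, hu1⟩ := invFunOn_tau_spec hT heE
      have hu1w : Function.invFunOn tau V₁ (tau w) = w := tau_injOn hT hu1W hw1 hu1
      refine ⟨heE, ?_⟩
      intro hcontra
      obtain ⟨hu2W, _⟩ := invFunOn_tau_spec hT' heE
      rw [hu1w] at hcontra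
      exact hw2 (hcontra ▸ hu2W)
    · rintro ⟨heE, hne⟩
      obtain ⟨hu1W, hu1⟩ := invFunOn_tau_spec hT heE
      obtain ⟨hu2W, hu2⟩ := invFunOn_tau_spec hT' heE
      refine ⟨Function.invFunOn tau V₁ e, ⟨hu1W, ?_⟩, hu1⟩
      intro hmem
      exact hne (tau_injOn hT' hmem hu2W (hu1.trans hu2.symm))
  have hF1 : tau '' (W₁ \ W₂) = Fs := htau_img W₁ W₂ hT₁ hT₂
  have hF2 : tau '' (W₂ \ W₁) = Fs := by
    rw [htau_img W₂ W₁ hT₂ hT₁]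
    ext e
    constructor
    · rintro ⟨hh1, hh2⟩; exact ⟨hh1, Ne.symm hh2⟩
    · rintro ⟨hh1, hh2⟩; exact ⟨hh1, Ne.symm hh2⟩
  have hG1m : MeasurableSet (W₁ \ W₂) := hW₁m.diff hW₂m
  have hG2m : MeasurableSet (W₂ \ W₁) := hW₂m.diff hW₁m
  obtain ⟨hFsm, hvol1⟩ := tau_image_spec hG1m ((tau_injOn hT₁).mono diff_subset)
  obtain ⟨_, hvol2⟩ := tau_image_spec hG2m ((tau_injOn hT₂).mono diff_subset)
  rw [hF1] at hFsm hvol1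
  rw [hF2] at hvol2
  have hFsE : Fs ⊆ E := fun e he => he.1
  have hξ := xiMap_image_volume hFsm hFsE
  have hΩsub : Ω ⊆ xiMap '' Fs := by
    rintro x ⟨hxI, hxne⟩
    have he : xiInv x ∈ E := xiInv_mem hxI
    rw [invFunOn_hIso_eq hT₁ hD₁ hxI, invFunOn_hIso_eq hT₂ hD₂ hxI] at hxne
    have hyne : Function.invFunOn tau W₁ (xiInv x) ≠ Function.invFunOn tau W₂ (xiInv x) := by
      intro h; apply hxne; rw [h]
    exact ⟨xiInv x, ⟨he, hyne⟩, xiMap_xiInv hxI⟩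
  set C : Set ℝ := ⋃ (a : ℤ), ⋃ (b : ℤ), ⋃ (n : ℤ),
    {xiMap (tau (2*π*(n:ℝ)*(2:ℝ)^b/((2:ℝ)^a-(2:ℝ)^b)))} with hCdef
  have hCcount : C.Countable :=
    countable_iUnion fun a => countable_iUnion fun b => countable_iUnion fun n =>
      countable_singleton _
  have hsub2 : xiMap '' Fs ⊆ Ω ∪ C := by
    rintro x ⟨e, ⟨heE, hne⟩, rfl⟩
    set y₁ := Function.invFunOn tau W₁ e with hy₁def
    set y₂ := Function.invFunOn tau W₂ e with hy₂def
    obtain ⟨hy₁W, hy₁tau⟩ := invFunOn_tau_spec hT₁ heE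
    obtain ⟨hy₂W, hy₂tau⟩ := invFunOn_tau_spec hT₂ heE
    have hxI : xiMap e ∈ Ico (0:ℝ) 1 := xiMap_mem heE
    have hinv : xiInv (xiMap e) = e := xiInv_xiMap heE
    by_cases hΩmem : xiMap e ∈ Ω
    · exact Or.inl hΩmem
    · right
      have heq : Function.invFunOn (hIso W₁) (Ico (0:ℝ) 1) (xiMap e) =
          Function.invFunOn (hIso W₂) (Ico (0:ℝ) 1) (xiMap e) := by
        by_contra hne2
        exact hΩmem ⟨hxI, hne2⟩
      rw [invFunOn_hIso_eq hT₁ hD₁ hxI, invFunOn_hIso_eq hT₂ hD₂ hxI, hinv] at heq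
      have hy₁0 : y₁ ≠ 0 := mem_ne_zero hD₁ hy₁W
      have hy₂0 : y₂ ≠ 0 := mem_ne_zero hD₂ hy₂W
      have hdeq : delta y₁ = delta y₂ :=
        xiMap_injOn (delta_mem_E hy₁0) (delta_mem_E hy₂0) heq
      obtain ⟨a, ha⟩ := delta_spec y₁
      obtain ⟨b, hb⟩ := delta_spec y₂
      obtain ⟨m₁, hm₁⟩ := tau_sub_exists y₁
      obtain ⟨m₂, hm₂⟩ := tau_sub_exists y₂
      have e1 : y₁ + 2*π*(m₁:ℝ) = e := by rw [← hm₁, hy₁tau]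
      have e2 : y₂ + 2*π*(m₂:ℝ) = e := by rw [← hm₂, hy₂tau]
      have hn : y₂ = y₁ + 2*π*((m₁ - m₂ : ℤ):ℝ) := by
        push_cast
        linear_combination e2 - e1
      have hkey : (2:ℝ)^a * y₁ = (2:ℝ)^b * (y₁ + 2*π*((m₁ - m₂ : ℤ):ℝ)) := by
        rw [← hn, ← ha, ← hb, hdeq]
      have hab : a ≠ b := by
        intro h
        apply hne
        subst h
        have h' : (2:ℝ)^a * y₁ = (2:ℝ)^a * y₂ := by rw [← ha, ← hb, hdeq]
        exact mul_left_cancel₀ (ne_of_gt (zpow_pos two_pos a)) h'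
      have h2ab : (2:ℝ)^a - (2:ℝ)^b ≠ 0 := by
        intro h
        exact hab (zpow_right_injective₀ two_pos (by norm_num) (sub_eq_zero.1 h))
      have hy₁val : y₁ = 2*π*((m₁ - m₂ : ℤ):ℝ)*(2:ℝ)^b/((2:ℝ)^a-(2:ℝ)^b) := by
        rw [eq_div_iff h2ab]
        linear_combination hkey
      refine mem_iUnion.2 ⟨a, mem_iUnion.2 ⟨b, mem_iUnion.2 ⟨m₁ - m₂, ?_⟩⟩⟩
      rw [mem_singleton_iff, ← hy₁val, hy₁tau]
  have hμC : volume C = 0 := hCcount.measure_zero _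
  have hμeq : volume (xiMap '' Fs) = volume Ω := by
    apply le_antisymm
    · calc volume (xiMap '' Fs) ≤ volume (Ω ∪ C) := measure_mono hsub2
        _ ≤ volume Ω + volume C := measure_union_le _ _
        _ = volume Ω := by rw [hμC, add_zero]
    · exact measure_mono hΩsub
  calc volume (W₁ ∆ W₂) = volume ((W₁ \ W₂) ∪ (W₂ \ W₁)) := by rw [Set.symmDiff_def]
    _ = volume (W₁ \ W₂) + volume (W₂ \ W₁) := measure_union disjoint_sdiff_sdiff hG2m
    _ = volume Fs + volume Fs := by rw [← hvol1, ← hvol2]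
    _ = 2 * volume Fs := (two_mul _).symm
    _ = 2 * (ENNReal.ofReal (2*π) * volume (xiMap '' Fs)) := by rw [← hξ]
    _ = ENNReal.ofReal (4*π) * volume Ω := by
        have h4 : ENNReal.ofReal (4*π) = 2 * ENNReal.ofReal (2*π) := by
          rw [show (4:ℝ)*π = 2*(2*π) by ring,
            ENNReal.ofReal_mul (by norm_num : (0:ℝ) ≤ 2), ENNReal.ofReal_ofNat]
        rw [hμeq, ← mul_assoc, h4]


end
end
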